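/- arXiv:2302.08732 — 4 statements merged into one kernel-verified Lean document; each statement's English description precedes it below -/
import Mathlib

section
/- Let s1 < s2 be real numbers, let f be a C^1 real-valued function on [s1,s2], and let g be a C^1 nonnegative increasing function on [s1,s2] with g(s2) > 0 and g'(s) > 0 for all s. Then there is an absolute constant C (independent of f, g, s1, s2) such that |f(s2)|^2 g(s2)^{-1} + g(s2)^{-2} ∫_{s1}^{s2} |f(s)|^2 g'(s) ds ≤ C ( |f(s1)|^2 g(s2)^{-1} + ∫_{s1}^{s2} |f'(s)|^2 g'(s)^{-1} ds ). -/
open Set intervalIntegral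

/-- Boundary-energy inequality (key_Eob1_2): there is an absolute constant `C` such that
for all `s1 < s2`, all `C¹` functions `f` and all nonnegative increasing `C¹` functions `g`
on `[s1,s2]` with `g s2 > 0` and `g' > 0`,
`|f s2|² g(s2)⁻¹ + g(s2)⁻² ∫ f² g' ≤ C (|f s1|² g(s2)⁻¹ + ∫ (f')² (g')⁻¹)`. -/
theorem boundary_energy_ineq_2 :
    ∃ C : ℝ, 0 < C ∧
      ∀ (s1 s2 : ℝ) (f g : ℝ → ℝ), s1 < s2 →
        ContDiffOn ℝ 1 f (Icc s1 s2) →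
        ContDiffOn ℝ 1 g (Icc s1 s2) →
        (∀ s ∈ Icc s1 s2, 0 ≤ g s) →
        MonotoneOn g (Icc s1 s2) →
        0 < g s2 →
        (∀ s ∈ Icc s1 s2, 0 < deriv g s) →
        (f s2)^2 * (g s2)⁻¹
            + (g s2)⁻¹^2 * ∫ s in s1..s2, (f s)^2 * deriv g s
          ≤ C * ((f s1)^2 * (g s2)⁻¹
            + ∫ s in s1..s2, (deriv f s)^2 * (deriv g s)⁻¹) := by
  refine ⟨4, by norm_num, ?_⟩
  intro s1 s2 f g hlt hf hg hgnn hgmono hgs2 hg'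
  have hle : s1 ≤ s2 := hlt.le
  have hs1I : s1 ∈ Icc s1 s2 := ⟨le_rfl, hle⟩
  have hs2I : s2 ∈ Icc s1 s2 := ⟨hle, le_rfl⟩
  have huniq : UniqueDiffOn ℝ (Icc s1 s2) := uniqueDiffOn_Icc hlt
  set F : ℝ → ℝ := derivWithin f (Icc s1 s2) with hFdef
  -- continuity facts
  have hfc : ContinuousOn f (Icc s1 s2) := hf.continuousOn
  have hgc : ContinuousOn g (Icc s1 s2) := hg.continuousOn
  have hFc : ContinuousOn F (Icc s1 s2) := hf.continuousOn_derivWithin huniq le_rfl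
  -- g is differentiable everywhere on [s1,s2] (since deriv g > 0 forces it)
  have hgdiff : ∀ s ∈ Icc s1 s2, DifferentiableAt ℝ g s := by
    intro s hs
    by_contra h
    have h0 : deriv g s = 0 := deriv_zero_of_not_differentiableAt h
    have := hg' s hs
    rw [h0] at this
    exact lt_irrefl 0 this
  have hgderiv : ∀ s ∈ Icc s1 s2, derivWithin g (Icc s1 s2) s = deriv g s := fun s hs =>
    ((hgdiff s hs).hasDerivAt.hasDerivWithinAt.derivWithin (huniq s hs))
  have hgdc : ContinuousOn (deriv g) (Icc s1 s2) :=
    (hg.continuousOn_derivWithin huniq le_rfl).congr fun s hs => (hgderiv s hs).symm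
  -- f has derivative F at interior points
  have hfderiv : ∀ s ∈ Ioo s1 s2, HasDerivAt f (F s) s := fun s hs =>
    ((hf.differentiableOn one_ne_zero) s (Ioo_subset_Icc_self hs)).hasDerivWithinAt.hasDerivAt
      (Icc_mem_nhds hs.1 hs.2)
  have hfderiv_eq : ∀ s ∈ Ioo s1 s2, deriv f s = F s := fun s hs => (hfderiv s hs).deriv
  -- integrability
  have hIg' : IntervalIntegrable (deriv g) MeasureTheory.volume s1 s2 := by
    apply ContinuousOn.intervalIntegrable
    rw [uIcc_of_le hle]
    exact hgdc
  have hIginv : IntervalIntegrable (fun s => (deriv g s)⁻¹) MeasureTheory.volume s1 s2 := by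
    apply ContinuousOn.intervalIntegrable
    rw [uIcc_of_le hle]
    exact hgdc.inv₀ fun s hs => (hg' s hs).ne'
  have hIf2g' : IntervalIntegrable (fun s => (f s)^2 * deriv g s) MeasureTheory.volume s1 s2 := by
    apply ContinuousOn.intervalIntegrable
    rw [uIcc_of_le hle]
    exact ((hfc.pow 2).mul hgdc)
  have hIabsF : IntervalIntegrable (fun s => |F s|) MeasureTheory.volume s1 s2 := by
    apply ContinuousOn.intervalIntegrable
    rw [uIcc_of_le hle]
    exact hFc.abs
  have hIF2 : IntervalIntegrable (fun s => (F s)^2 * (deriv g s)⁻¹) MeasureTheory.volume s1 s2 := by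
    apply ContinuousOn.intervalIntegrable
    rw [uIcc_of_le hle]
    exact (hFc.pow 2).mul (hgdc.inv₀ fun s hs => (hg' s hs).ne')
  -- rewrite the goal integral with F in place of deriv f
  have hcongr : (∫ s in s1..s2, (deriv f s)^2 * (deriv g s)⁻¹)
      = ∫ s in s1..s2, (F s)^2 * (deriv g s)⁻¹ := by
    apply intervalIntegral.integral_congr_ae
    have h2 : ∀ᵐ x : ℝ, x ≠ s2 := by
      rw [MeasureTheory.ae_iff]
      simpa using MeasureTheory.measure_singleton s2 (μ := MeasureTheory.volume)
    filter_upwards [h2] with x hx hxI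
    rw [uIoc_of_le hle] at hxI
    rw [hfderiv_eq x ⟨hxI.1, lt_of_le_of_ne hxI.2 hx⟩]
  rw [hcongr]
  set G := g s2 with hGdef
  set I2 := ∫ s in s1..s2, (F s)^2 * (deriv g s)⁻¹ with hI2def
  set a := ∫ s in s1..s2, |F s| with hadef
  have hI2nn : 0 ≤ I2 := by
    apply intervalIntegral.integral_nonneg hle
    intro u hu
    exact mul_nonneg (sq_nonneg _) (inv_nonneg.mpr (hg' u hu).le)
  have hann : 0 ≤ a := by
    apply intervalIntegral.integral_nonneg hle
    intro u hu
    positivity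
  -- FTC for g
  have hgFTC : (∫ s in s1..s2, deriv g s) = g s2 - g s1 := by
    apply intervalIntegral.integral_eq_sub_of_hasDeriv_right_of_le hle hgc
      (fun x hx => ((hgdiff x (Ioo_subset_Icc_self hx)).hasDerivAt.hasDerivWithinAt)) hIg'
  -- pointwise: |f s - f s1| ≤ a
  have hfa : ∀ s ∈ Icc s1 s2, |f s - f s1| ≤ a := by
    intro s hs
    have hsub : Icc s1 s ⊆ Icc s1 s2 := Icc_subset_Icc le_rfl hs.2
    have hIFs : IntervalIntegrable F MeasureTheory.volume s1 s := by
      apply ContinuousOn.intervalIntegrable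
      rw [uIcc_of_le hs.1]
      exact hFc.mono hsub
    have hFTCf : (∫ u in s1..s, F u) = f s - f s1 :=
      intervalIntegral.integral_eq_sub_of_hasDeriv_right_of_le hs.1 (hfc.mono hsub)
        (fun x hx => (hfderiv x ⟨hx.1, lt_of_lt_of_le hx.2 hs.2⟩).hasDerivWithinAt) hIFs
    calc |f s - f s1| = |∫ u in s1..s, F u| := by rw [hFTCf]
      _ ≤ ∫ u in s1..s, |F u| := intervalIntegral.abs_integral_le_integral_abs hs.1
      _ ≤ a := by
          apply intervalIntegral.integral_mono_interval le_rfl hs.1 hs.2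
          · filter_upwards with x using abs_nonneg _
          · exact hIabsF
  -- AM-GM bound on a, for every t > 0
  have hkey : ∀ t : ℝ, 0 < t → a ≤ (2*t)⁻¹ * I2 + t/2 * G := by
    intro t ht
    have hmono : a ≤ ∫ s in s1..s2, ((2*t)⁻¹ * ((F s)^2 * (deriv g s)⁻¹) + t/2 * deriv g s) := by
      apply intervalIntegral.integral_mono_on hle hIabsF
      · exact (hIF2.const_mul _).add (hIg'.const_mul _)
      · intro s hs
        have hc : 0 < deriv g s := hg' s hs
        have heq : (2*t)⁻¹ * ((F s)^2 * (deriv g s)⁻¹) + t/2 * deriv g s - |F s|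
            = ((F s)^2 + (t * deriv g s)^2 - |F s| * (2*t*deriv g s)) / (2*t*deriv g s) := by
          field_simp
        have hnum : 0 ≤ (F s)^2 + (t * deriv g s)^2 - |F s| * (2*t*deriv g s) := by
          nlinarith [sq_nonneg (|F s| - t * deriv g s), sq_abs (F s)]
        have hden : 0 < 2*t*deriv g s := by positivity
        nlinarith [div_nonneg hnum hden.le, heq]
    have hsplit : (∫ s in s1..s2, ((2*t)⁻¹ * ((F s)^2 * (deriv g s)⁻¹) + t/2 * deriv g s))
        = (2*t)⁻¹ * I2 + t/2 * (g s2 - g s1) := by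
      rw [intervalIntegral.integral_add (hIF2.const_mul _) (hIg'.const_mul _),
        intervalIntegral.integral_const_mul, intervalIntegral.integral_const_mul, hgFTC]
    have hgs1 : 0 ≤ g s1 := hgnn s1 hs1I
    have ht2 : (0:ℝ) ≤ t/2 := by positivity
    have hstep : t/2 * (g s2 - g s1) ≤ t/2 * G := by
      apply mul_le_mul_of_nonneg_left _ ht2
      have hgs1 : 0 ≤ g s1 := hgnn s1 hs1I
      simp only [hGdef]; linarith
    rw [hsplit] at hmono
    linarith
  -- a² ≤ G * I2
  have ha2 : a^2 ≤ G * I2 := by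
    rcases eq_or_lt_of_le hann with h | h
    · rw [← h]
      simpa using mul_nonneg hgs2.le hI2nn
    · have ht : 0 < a / G := div_pos h hgs2
      have := hkey (a/G) ht
      have hG : (0:ℝ) < G := hgs2
      have h1 : (2*(a/G))⁻¹ = G/(2*a) := by field_simp
      have h2 : (a/G)/2 * G = a/2 := by field_simp
      rw [h1, h2] at this
      have h3 : a/2 ≤ G/(2*a) * I2 := by linarith
      have h4 : a * (a/2) ≤ a * (G/(2*a) * I2) := mul_le_mul_of_nonneg_left h3 h.le
      have h5 : a * (G/(2*a) * I2) = G * I2 / 2 := by field_simp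
      nlinarith
  -- pointwise bound f s ^ 2 ≤ M
  have hM : ∀ s ∈ Icc s1 s2, (f s)^2 ≤ 2 * (f s1)^2 + 2 * (G * I2) := by
    intro s hs
    have h1 := hfa s hs
    have h2 : (f s - f s1)^2 ≤ a^2 := by
      rw [← sq_abs (f s - f s1)]
      exact pow_le_pow_left₀ (abs_nonneg _) h1 2
    nlinarith [h2, ha2, sq_nonneg (f s - 2 * f s1)]
  -- bound on ∫ f² g'
  have hintf2 : (∫ s in s1..s2, (f s)^2 * deriv g s)
      ≤ (2 * (f s1)^2 + 2 * (G * I2)) * G := by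
    have hMnn : 0 ≤ 2 * (f s1)^2 + 2 * (G * I2) := by positivity
    have step1 : (∫ s in s1..s2, (f s)^2 * deriv g s)
        ≤ ∫ s in s1..s2, (2 * (f s1)^2 + 2 * (G * I2)) * deriv g s := by
      apply intervalIntegral.integral_mono_on hle hIf2g' (hIg'.const_mul _)
      intro s hs
      exact mul_le_mul_of_nonneg_right (hM s hs) (hg' s hs).le
    have step2 : (∫ s in s1..s2, (2 * (f s1)^2 + 2 * (G * I2)) * deriv g s)
        = (2 * (f s1)^2 + 2 * (G * I2)) * (g s2 - g s1) := by
      rw [intervalIntegral.integral_const_mul, hgFTC]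
    have hgs1 : 0 ≤ g s1 := hgnn s1 hs1I
    have step3 : (2 * (f s1)^2 + 2 * (G * I2)) * (g s2 - g s1)
        ≤ (2 * (f s1)^2 + 2 * (G * I2)) * G := by
      apply mul_le_mul_of_nonneg_left _ hMnn
      simp only [hGdef]; linarith
    rw [step2] at step1
    linarith
  -- conclude
  have hfs2 : (f s2)^2 ≤ 2 * (f s1)^2 + 2 * (G * I2) := hM s2 hs2I
  have hGpos : (0:ℝ) < G := hgs2
  have hGinv : 0 < G⁻¹ := inv_pos.mpr hGpos
  have hGG : G⁻¹ * G = 1 := inv_mul_cancel₀ hGpos.ne'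
  have e1 : (f s2)^2 * G⁻¹ ≤ (2 * (f s1)^2 + 2 * (G * I2)) * G⁻¹ :=
    mul_le_mul_of_nonneg_right hfs2 hGinv.le
  have e2 : G⁻¹^2 * (∫ s in s1..s2, (f s)^2 * deriv g s)
      ≤ G⁻¹^2 * ((2 * (f s1)^2 + 2 * (G * I2)) * G) := by
    apply mul_le_mul_of_nonneg_left hintf2 (by positivity)
  have e3 : (2 * (f s1)^2 + 2 * (G * I2)) * G⁻¹ = 2 * ((f s1)^2 * G⁻¹) + 2 * I2 := by
    field_simp
  have e4 : G⁻¹^2 * ((2 * (f s1)^2 + 2 * (G * I2)) * G) = 2 * ((f s1)^2 * G⁻¹) + 2 * I2 := by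
    field_simp
  calc (f s2)^2 * G⁻¹ + G⁻¹^2 * (∫ s in s1..s2, (f s)^2 * deriv g s)
      ≤ (2 * (f s1)^2 + 2 * (G * I2)) * G⁻¹
          + G⁻¹^2 * ((2 * (f s1)^2 + 2 * (G * I2)) * G) := add_le_add e1 e2
    _ = (2 * ((f s1)^2 * G⁻¹) + 2 * I2) + (2 * ((f s1)^2 * G⁻¹) + 2 * I2) := by
        rw [e3, e4]
    _ = 4 * ((f s1)^2 * G⁻¹ + I2) := by ring
end

section
/- Let s1 < s2 be real numbers, let f be a C^1 real-valued function on [s1,s2], and let g be a C^1 positive increasing function on [s1,s2] with g'(s) > 0 for all s. Then there is an absolute constant C such that |f(s2)|^2 g(s2)^{-1} + ∫_{s1}^{s2} |f(s)|^2 g(s)^{-2} g'(s) ds ≤ C ( |f(s1)|^2 g(s1)^{-1} + ∫_{s1}^{s2} |f'(s)|^2 g'(s)^{-1} ds ). -/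
open Set intervalIntegral

/-- Boundary-energy inequality (key_Eob1_1): there is an absolute constant `C` such that
for all `s1 < s2`, all `C¹` functions `f` and all positive increasing `C¹` functions `g`
on `[s1,s2]` with `g' > 0`,
`|f s2|² g(s2)⁻¹ + ∫ f² g⁻² g' ≤ C (|f s1|² g(s1)⁻¹ + ∫ (f')² (g')⁻¹)`. -/
theorem boundary_energy_ineq_1 :
    ∃ C : ℝ, 0 < C ∧
      ∀ (s1 s2 : ℝ) (f g : ℝ → ℝ), s1 < s2 →
        ContDiffOn ℝ 1 f (Icc s1 s2) →
        ContDiffOn ℝ 1 g (Icc s1 s2) →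
        (∀ s ∈ Icc s1 s2, 0 < g s) →
        MonotoneOn g (Icc s1 s2) →
        (∀ s ∈ Icc s1 s2, 0 < deriv g s) →
        (f s2)^2 * (g s2)⁻¹
            + ∫ s in s1..s2, (f s)^2 * (g s)⁻¹^2 * deriv g s
          ≤ C * ((f s1)^2 * (g s1)⁻¹
            + ∫ s in s1..s2, (deriv f s)^2 * (deriv g s)⁻¹) := by
  refine ⟨4, by norm_num, ?_⟩
  intro s1 s2 f g hlt hf hg hgpos hgmono hg'
  have hle : s1 ≤ s2 := hlt.le
  have hu : uIcc s1 s2 = Icc s1 s2 := uIcc_of_le hle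
  have hud : UniqueDiffOn ℝ (Icc s1 s2) := uniqueDiffOn_Icc hlt
  set F := derivWithin f (Icc s1 s2) with hFdef
  set G := derivWithin g (Icc s1 s2) with hGdef
  have hfc : ContinuousOn f (Icc s1 s2) := hf.continuousOn
  have hgc : ContinuousOn g (Icc s1 s2) := hg.continuousOn
  have hFc : ContinuousOn F (Icc s1 s2) := hf.continuousOn_derivWithin hud le_rfl
  have hGc : ContinuousOn G (Icc s1 s2) := hg.continuousOn_derivWithin hud le_rfl
  have hgne : ∀ s ∈ Icc s1 s2, g s ≠ 0 := fun s hs => ne_of_gt (hgpos s hs)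
  -- g is differentiable (in the full sense) at every point of Icc
  have hgdiff : ∀ s ∈ Icc s1 s2, DifferentiableAt ℝ g s := by
    intro s hs
    by_contra h
    have h0 := deriv_zero_of_not_differentiableAt h
    have := hg' s hs
    rw [h0] at this
    exact lt_irrefl 0 this
  have hGeq : ∀ s ∈ Icc s1 s2, G s = deriv g s := fun s hs =>
    (hgdiff s hs).derivWithin (hud s hs)
  have hGpos : ∀ s ∈ Icc s1 s2, 0 < G s := fun s hs => (hGeq s hs) ▸ hg' s hs
  have hgHas : ∀ s ∈ Icc s1 s2, HasDerivAt g (G s) s := by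
    intro s hs
    rw [hGeq s hs]
    exact (hgdiff s hs).hasDerivAt
  have hfdiff : ∀ s ∈ Ioo s1 s2, HasDerivAt f (F s) s ∧ F s = deriv f s := by
    intro s hs
    have hmem : Icc s1 s2 ∈ nhds s := Icc_mem_nhds hs.1 hs.2
    have hd : DifferentiableAt ℝ f s :=
      ((hf.differentiableOn one_ne_zero) s (Ioo_subset_Icc_self hs)).differentiableAt hmem
    have heq : F s = deriv f s := hd.derivWithin (hud s (Ioo_subset_Icc_self hs))
    exact ⟨heq ▸ hd.hasDerivAt, heq⟩
  -- the energy function and its derivative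
  set A := fun s => 2 * f s * F s * (g s)⁻¹ with hAdef
  set B := fun s => (f s)^2 * ((g s)⁻¹)^2 * G s with hBdef
  set D := fun s => (F s)^2 * (G s)⁻¹ with hDdef
  have hE : ∀ s ∈ Ioo s1 s2,
      HasDerivAt (fun t => (f t)^2 * (g t)⁻¹) (A s - B s) s := by
    intro s hs
    have hsI := Ioo_subset_Icc_self hs
    have h1 := (hfdiff s hs).1.pow 2
    have h2 := (hgHas s hsI).inv (hgne s hsI)
    have h3 := h1.mul h2
    refine h3.congr_deriv ?_
    have hgs := hgne s hsI
    simp only [hAdef, hBdef, Pi.pow_apply, Pi.inv_apply]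
    field_simp
    ring
  have hEcont : ContinuousOn (fun t => (f t)^2 * (g t)⁻¹) (Icc s1 s2) :=
    (hfc.pow 2).mul (hgc.inv₀ hgne)
  have hAcont : ContinuousOn A (Icc s1 s2) :=
    ((continuousOn_const.mul hfc).mul hFc).mul (hgc.inv₀ hgne)
  have hBcont : ContinuousOn B (Icc s1 s2) :=
    ((hfc.pow 2).mul ((hgc.inv₀ hgne).pow 2)).mul hGc
  have hDcont : ContinuousOn D (Icc s1 s2) :=
    (hFc.pow 2).mul (hGc.inv₀ (fun s hs => ne_of_gt (hGpos s hs)))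
  have hAint : IntervalIntegrable A MeasureTheory.volume s1 s2 :=
    (hu ▸ hAcont).intervalIntegrable
  have hBint : IntervalIntegrable B MeasureTheory.volume s1 s2 :=
    (hu ▸ hBcont).intervalIntegrable
  have hDint : IntervalIntegrable D MeasureTheory.volume s1 s2 :=
    (hu ▸ hDcont).intervalIntegrable
  have hABint : IntervalIntegrable (fun s => A s - B s) MeasureTheory.volume s1 s2 :=
    hAint.sub hBint
  have hftc : ∫ t in s1..s2, (A t - B t)
      = (f s2)^2 * (g s2)⁻¹ - (f s1)^2 * (g s1)⁻¹ :=
    integral_eq_sub_of_hasDeriv_right_of_le hle hEcont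
      (fun s hs => (hE s hs).hasDerivWithinAt) hABint
  have hsplit : ∫ t in s1..s2, (A t - B t)
      = (∫ t in s1..s2, A t) - ∫ t in s1..s2, B t :=
    integral_sub hAint hBint
  -- pointwise inequality A ≤ (1/2) B + 2 D on Icc
  have hpt : ∀ s ∈ Icc s1 s2, A s ≤ (1/2) * B s + 2 * D s := by
    intro s hs
    have hGs := hGpos s hs
    have hgs := hgpos s hs
    have h1 : G s * (G s)⁻¹ = 1 := mul_inv_cancel₀ (ne_of_gt hGs)
    simp only [hAdef, hBdef, hDdef]
    have key : 2 * f s * F s * (g s)⁻¹ * G s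
        ≤ ((1/2) * ((f s)^2 * ((g s)⁻¹)^2 * G s) + 2 * ((F s)^2 * (G s)⁻¹)) * G s := by
      have hsq := sq_nonneg (f s * (g s)⁻¹ * G s - 2 * F s)
      nlinarith [sq_nonneg (F s), hGs, h1]
    have := (mul_le_mul_iff_of_pos_right hGs).mp key
    linarith
  have hmono : (∫ t in s1..s2, A t)
      ≤ ∫ t in s1..s2, ((1/2) * B t + 2 * D t) :=
    intervalIntegral.integral_mono_on hle hAint
      ((hBint.const_mul _).add (hDint.const_mul _)) hpt
  have hsplit2 : (∫ t in s1..s2, ((1/2) * B t + 2 * D t))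
      = (1/2) * (∫ t in s1..s2, B t) + 2 * ∫ t in s1..s2, D t := by
    rw [integral_add (hBint.const_mul _) (hDint.const_mul _),
      integral_const_mul, integral_const_mul]
  -- nonnegativity
  have hBnn : 0 ≤ ∫ t in s1..s2, B t := by
    apply intervalIntegral.integral_nonneg hle
    intro u hu'
    have := hGpos u hu'
    positivity
  have hE1nn : 0 ≤ (f s1)^2 * (g s1)⁻¹ := by
    have := hgpos s1 (left_mem_Icc.mpr hle)
    positivity
  have hE2nn : 0 ≤ (f s2)^2 * (g s2)⁻¹ := by
    have := hgpos s2 (right_mem_Icc.mpr hle)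
    positivity
  -- identify the statement's integrals
  have hBid : (∫ s in s1..s2, (f s)^2 * (g s)⁻¹^2 * deriv g s) = ∫ t in s1..s2, B t := by
    apply intervalIntegral.integral_congr
    intro s hs
    rw [hu] at hs
    simp only [hBdef, hGeq s hs]
  have hDid : (∫ s in s1..s2, (deriv f s)^2 * (deriv g s)⁻¹) = ∫ t in s1..s2, D t := by
    apply intervalIntegral.integral_congr_ae
    have hs2 : ∀ᵐ x : ℝ, x ∉ ({s2} : Set ℝ) :=
      MeasureTheory.measure_eq_zero_iff_ae_notMem.mp Real.volume_singleton
    filter_upwards [hs2] with x hx hxI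
    rw [uIoc_of_le hle] at hxI
    have hxIoo : x ∈ Ioo s1 s2 := ⟨hxI.1, lt_of_le_of_ne hxI.2 (by simpa using hx)⟩
    have hxIcc := Ioo_subset_Icc_self hxIoo
    simp only [hDdef, ← (hfdiff x hxIoo).2, ← hGeq x hxIcc]
  rw [hBid, hDid]
  -- combine
  have key : (f s2)^2 * (g s2)⁻¹ + ∫ t in s1..s2, B t
      = (f s1)^2 * (g s1)⁻¹ + ∫ t in s1..s2, A t := by
    rw [hsplit] at hftc; linarith
  have hDnn : 0 ≤ ∫ t in s1..s2, D t := by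
    apply intervalIntegral.integral_nonneg hle
    intro u hu'
    have := hGpos u hu'
    positivity
  nlinarith [hmono, hsplit2, key, hBnn, hE1nn, hE2nn, hDnn]
end

section
/- Let m > 0 and s2 > 0, and let f be a C^1 function on (0, s2] such that the integral ∫_0^{s2} s^{-m-1} ( |f(s)|^2 + |s f'(s)|^2 ) ds is finite. Then sup_{s ∈ (0, s2]} s^{-m} |f(s)|^2 ≤ C m^{-1} ∫_0^{s2} s^{-m-1} ( |f(s)|^2 + |s f'(s)|^2 ) ds for an absolute constant C. -/
open Set MeasureTheory Real

/-- Weighted pointwise bound near the origin (key_Eob3_2): there is an absolute constant `C`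
such that for every `m > 0`, `s2 > 0` and every `C¹` function `f` on `(0, s2]` with
`∫_0^{s2} s^{-m-1} (|f|² + |s f'|²) ds < ∞`, one has
`s^{-m} |f s|² ≤ C m⁻¹ ∫_0^{s2} s^{-m-1} (|f|² + |s f'|²) ds` for all `s ∈ (0,s2]`. -/
theorem weighted_bound_origin :
    ∃ C : ℝ, 0 < C ∧
      ∀ (m s2 : ℝ) (f : ℝ → ℝ), 0 < m → 0 < s2 →
        ContDiffOn ℝ 1 f (Ioc 0 s2) →
        IntegrableOn
          (fun s => s ^ (-m - 1) * ((f s) ^ 2 + (s * deriv f s) ^ 2)) (Ioc 0 s2) →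
        ∀ s ∈ Ioc (0:ℝ) s2,
          s ^ (-m) * (f s) ^ 2
            ≤ C * m⁻¹ *
              ∫ t in Ioc (0:ℝ) s2, t ^ (-m - 1) * ((f t) ^ 2 + (t * deriv f t) ^ 2) := by
  refine ⟨1, one_pos, ?_⟩
  intro m s2 f hm hs2 hf hint s hs
  obtain ⟨hs0, hss2⟩ := hs
  set φ : ℝ → ℝ := fun t => t ^ (-m - 1) * ((f t) ^ 2 + (t * deriv f t) ^ 2) with hφdef
  set I : ℝ := ∫ t in Ioc (0:ℝ) s2, φ t with hIdef
  have hφ_nonneg : ∀ t : ℝ, 0 < t → 0 ≤ φ t := by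
    intro t ht
    exact mul_nonneg (rpow_nonneg ht.le _) (by positivity)
  -- rewrite t^(-m-1) * t = t^(-m)
  have hsplit : ∀ t : ℝ, 0 < t → t ^ (-m - 1) * t = t ^ (-m) := by
    intro t ht
    have h := Real.rpow_add ht (-m - 1) 1
    rw [Real.rpow_one] at h
    rw [← h]
    norm_num
  -- key estimate
  have key : ∀ ε ∈ Ioo (0:ℝ) s, s ^ (-m) * f s ^ 2 ≤ ε ^ (-m) * f ε ^ 2 + m⁻¹ * I := by
    intro ε hε
    obtain ⟨hε0, hεs⟩ := hε
    have hIccsub : Icc ε s ⊆ Ioc 0 s2 := fun t ht => ⟨lt_of_lt_of_le hε0 ht.1, le_trans ht.2 hss2⟩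
    have hIocsub : Ioc ε s ⊆ Ioc 0 s2 := fun t ht => ⟨lt_trans hε0 ht.1, le_trans ht.2 hss2⟩
    set G : ℝ → ℝ := fun t => t ^ (-m) * f t ^ 2 with hGdef
    set G' : ℝ → ℝ := fun t => (-m) * t ^ (-m - 1) * f t ^ 2 + t ^ (-m) * (2 * f t * deriv f t)
      with hG'def
    -- continuity of G on Icc ε s
    have hGcont : ContinuousOn G (Icc ε s) := by
      apply ContinuousOn.mul
      · intro t ht
        exact (Real.continuousAt_rpow_const t (-m)
          (Or.inl (ne_of_gt (lt_of_lt_of_le hε0 ht.1)))).continuousWithinAt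
      · exact ((hf.continuousOn.mono hIccsub).pow 2)
    -- derivative of G on Ioo ε s
    have hGderiv : ∀ t ∈ Ioo ε s, HasDerivAt G (G' t) t := by
      intro t ht
      have ht0 : 0 < t := lt_trans hε0 ht.1
      have hmem : Ioc 0 s2 ∈ nhds t := by
        refine Filter.mem_of_superset (Ioo_mem_nhds ht0 (lt_of_lt_of_le ht.2 hss2)) Ioo_subset_Ioc_self
      have hfd : HasDerivAt f (deriv f t) t := by
        have : DifferentiableAt ℝ f t :=
          ((hf.differentiableOn one_ne_zero) t ⟨ht0, le_trans ht.2.le hss2⟩).differentiableAt hmem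
        exact this.hasDerivAt
      have h1 : HasDerivAt (fun x : ℝ => x ^ (-m)) ((-m) * t ^ (-m - 1)) t := by
        exact Real.hasDerivAt_rpow_const (Or.inl ht0.ne')
      have h2 : HasDerivAt (fun x => f x ^ 2) (2 * f t * deriv f t) t := by
        have : HasDerivAt (fun x => f x ^ 2) (((2:ℕ):ℝ) * f t ^ (2 - 1) * deriv f t) t := hfd.pow 2
        convert this using 1
        push_cast
        norm_num
      exact h1.mul h2
    -- integrability of G'
    have hφIocInt : IntegrableOn φ (Ioc ε s) := hint.mono_set hIocsub
    have hG'meas : AEStronglyMeasurable G' (volume.restrict (Ioc ε s)) := by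
      have hfm : AEStronglyMeasurable f (volume.restrict (Ioc ε s)) :=
        (hf.continuousOn.mono hIocsub).aestronglyMeasurable measurableSet_Ioc
      have hdm : AEStronglyMeasurable (deriv f) (volume.restrict (Ioc ε s)) :=
        (measurable_deriv f).aestronglyMeasurable
      have hr1 : AEStronglyMeasurable (fun t : ℝ => t ^ (-m - 1)) (volume.restrict (Ioc ε s)) :=
        ContinuousOn.aestronglyMeasurable (fun t htt => (Real.continuousAt_rpow_const t _
          (Or.inl (ne_of_gt (lt_trans hε0 htt.1)))).continuousWithinAt) measurableSet_Ioc
      have hr2 : AEStronglyMeasurable (fun t : ℝ => t ^ (-m)) (volume.restrict (Ioc ε s)) :=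
        ContinuousOn.aestronglyMeasurable (fun t htt => (Real.continuousAt_rpow_const t _
          (Or.inl (ne_of_gt (lt_trans hε0 htt.1)))).continuousWithinAt) measurableSet_Ioc
      exact ((aestronglyMeasurable_const.mul hr1).mul (hfm.pow 2)).add
        (hr2.mul ((aestronglyMeasurable_const.mul hfm).mul hdm))
    have hbound : ∀ t ∈ Ioc ε s, ‖G' t‖ ≤ (m + 1) * φ t := by
      intro t ht
      have ht0 : 0 < t := lt_trans hε0 ht.1
      have hG'eq : G' t = t ^ (-m - 1) * ((-m) * f t ^ 2 + 2 * f t * (t * deriv f t)) := by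
        simp only [hG'def]
        rw [← hsplit t ht0]
        ring
      rw [hG'eq, hφdef]
      rw [Real.norm_eq_abs, abs_mul, abs_of_nonneg (rpow_nonneg ht0.le _)]
      rw [show (m + 1) * (t ^ (-m - 1) * ((f t) ^ 2 + (t * deriv f t) ^ 2))
        = t ^ (-m - 1) * ((m + 1) * ((f t) ^ 2 + (t * deriv f t) ^ 2)) by ring]
      apply mul_le_mul_of_nonneg_left _ (rpow_nonneg ht0.le _)
      rw [abs_le]
      constructor
      · nlinarith [sq_nonneg (f t + t * deriv f t), sq_nonneg (f t), sq_nonneg (t * deriv f t), hm.le]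
      · nlinarith [sq_nonneg (f t - t * deriv f t), sq_nonneg (f t), sq_nonneg (t * deriv f t), hm.le]
    have hG'int : IntervalIntegrable G' volume ε s := by
      rw [intervalIntegrable_iff_integrableOn_Ioc_of_le hεs.le]
      refine Integrable.mono (hφIocInt.const_mul (m + 1)) hG'meas ?_
      refine (ae_restrict_iff' measurableSet_Ioc).2 (Filter.Eventually.of_forall ?_)
      intro t ht
      calc ‖G' t‖ ≤ (m + 1) * φ t := hbound t ht
        _ ≤ ‖(m + 1) * φ t‖ := le_abs_self _
    -- FTC
    have hFTC : ∫ t in ε..s, G' t = G s - G ε := by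
      apply intervalIntegral.integral_eq_sub_of_hasDeriv_right_of_le hεs.le hGcont
        (fun t ht => (hGderiv t ht).hasDerivWithinAt) hG'int
    -- pointwise bound G' ≤ m⁻¹ φ
    have hle : ∀ t ∈ Icc ε s, G' t ≤ m⁻¹ * φ t := by
      intro t ht
      have ht0 : 0 < t := lt_of_lt_of_le hε0 ht.1
      have hG'eq : G' t = t ^ (-m - 1) * ((-m) * f t ^ 2 + 2 * f t * (t * deriv f t)) := by
        simp only [hG'def]
        rw [← hsplit t ht0]
        ring
      rw [hG'eq, hφdef]
      rw [show m⁻¹ * (t ^ (-m - 1) * ((f t) ^ 2 + (t * deriv f t) ^ 2))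
        = t ^ (-m - 1) * (m⁻¹ * ((f t) ^ 2 + (t * deriv f t) ^ 2)) by ring]
      apply mul_le_mul_of_nonneg_left _ (rpow_nonneg ht0.le _)
      have hmi : m * m⁻¹ = 1 := mul_inv_cancel₀ hm.ne'
      nlinarith [sq_nonneg (m * f t - t * deriv f t), sq_nonneg (f t),
        mul_nonneg (inv_nonneg.2 hm.le) (sq_nonneg (m * f t - t * deriv f t)),
        mul_nonneg (inv_nonneg.2 hm.le) (sq_nonneg (f t))]
    have hφIntInt : IntervalIntegrable (fun t => m⁻¹ * φ t) volume ε s := by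
      rw [intervalIntegrable_iff_integrableOn_Ioc_of_le hεs.le]
      exact hφIocInt.const_mul _
    have hmono : ∫ t in ε..s, G' t ≤ ∫ t in ε..s, m⁻¹ * φ t :=
      intervalIntegral.integral_mono_on hεs.le hG'int hφIntInt hle
    have hIbound : ∫ t in ε..s, m⁻¹ * φ t ≤ m⁻¹ * I := by
      rw [intervalIntegral.integral_const_mul]
      apply mul_le_mul_of_nonneg_left _ (inv_nonneg.2 hm.le)
      rw [intervalIntegral.integral_of_le hεs.le]
      apply setIntegral_mono_set hint
      · exact (ae_restrict_iff' measurableSet_Ioc).2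
          (Filter.Eventually.of_forall fun t ht => hφ_nonneg t ht.1)
      · exact HasSubset.Subset.eventuallyLE hIocsub
    have : G s - G ε ≤ m⁻¹ * I := by
      rw [← hFTC]; exact le_trans hmono hIbound
    simp only [hGdef] at this
    linarith
  -- choose small ε
  have small : ∀ δ : ℝ, 0 < δ → ∃ ε ∈ Ioo (0:ℝ) s, ε ^ (-m) * f ε ^ 2 < δ := by
    intro δ hδ
    by_contra hcon
    push_neg at hcon
    have hIoosub : Ioo (0:ℝ) s ⊆ Ioc 0 s2 := fun t ht => ⟨ht.1, le_trans ht.2.le hss2⟩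
    have hφIoo : IntegrableOn φ (Ioo 0 s) := hint.mono_set hIoosub
    have : IntegrableOn (fun t : ℝ => t ^ (-1 : ℝ)) (Ioo (0:ℝ) s) := by
      refine Integrable.mono (hφIoo.const_mul δ⁻¹) ?_ ?_
      · exact ContinuousOn.aestronglyMeasurable (fun t htt => (Real.continuousAt_rpow_const t _
          (Or.inl (ne_of_gt htt.1))).continuousWithinAt) measurableSet_Ioo
      · refine (ae_restrict_iff' measurableSet_Ioo).2 (Filter.Eventually.of_forall ?_)
        intro t ht
        have ht0 : 0 < t := ht.1
        have h1 : δ * t ^ (-1 : ℝ) ≤ φ t := by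
          have h2 : t ^ (-m) * f t ^ 2 ≥ δ := hcon t ht
          have h3 : φ t ≥ t ^ (-m - 1) * f t ^ 2 := by
            simp only [hφdef]
            have := rpow_nonneg ht0.le (-m - 1)
            nlinarith [sq_nonneg (t * deriv f t)]
          have h4 : t ^ (-m - 1) = t ^ (-1 : ℝ) * t ^ (-m) := by
            rw [show -m - 1 = -1 + -m by ring, Real.rpow_add ht0]
          have h5 : (0:ℝ) ≤ t ^ (-1 : ℝ) := rpow_nonneg ht0.le _
          calc δ * t ^ (-1:ℝ) ≤ t ^ (-1:ℝ) * (t ^ (-m) * f t ^ 2) := by nlinarith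
            _ = t ^ (-m - 1) * f t ^ 2 := by rw [h4]; ring
            _ ≤ φ t := h3
        rw [Real.norm_eq_abs, abs_of_nonneg (rpow_nonneg ht0.le _), Real.norm_eq_abs]
        have hφn := hφ_nonneg t ht0
        rw [abs_of_nonneg (by positivity : (0:ℝ) ≤ δ⁻¹ * φ t)]
        rw [← mul_le_mul_iff_right₀ hδ]
        calc δ * t ^ (-1:ℝ) ≤ φ t := h1
          _ = δ * (δ⁻¹ * φ t) := by field_simp
    rw [intervalIntegral.integrableOn_Ioo_rpow_iff hs0] at this
    linarith
  -- conclude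
  have final : ∀ δ : ℝ, 0 < δ → s ^ (-m) * f s ^ 2 ≤ m⁻¹ * I + δ := by
    intro δ hδ
    obtain ⟨ε, hε, hεsmall⟩ := small δ hδ
    have := key ε hε
    linarith
  have := le_of_forall_pos_le_add final
  calc s ^ (-m) * f s ^ 2 ≤ m⁻¹ * I + 0 := by linarith
    _ = 1 * m⁻¹ * I := by ring
end

section
/- Let m > 0 and s1 > 0, and let f be a C^1 function on [s1, ∞) such that ∫_{s1}^∞ s^{m-1} ( |f(s)|^2 + |s f'(s)|^2 ) ds is finite. Then sup_{s ∈ [s1, ∞)} s^m |f(s)|^2 ≤ C m^{-1} ∫_{s1}^∞ s^{m-1} ( |f(s)|^2 + |s f'(s)|^2 ) ds for an absolute constant C. -/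
open Set MeasureTheory Real

/-- Weighted pointwise decay bound at infinity (key_Eob3_1): there is an absolute constant `C`
such that for every `m > 0`, `s1 > 0` and every `C¹` function `f` on `[s1, ∞)` with
`∫_{s1}^∞ s^(m-1) (|f|² + |s f'|²) ds < ∞`, one has
`s^m |f s|² ≤ C m⁻¹ ∫_{s1}^∞ s^(m-1) (|f|² + |s f'|²) ds` for all `s ∈ [s1, ∞)`. -/
theorem weighted_bound_infinity :
    ∃ C : ℝ, 0 < C ∧
      ∀ (m s1 : ℝ) (f : ℝ → ℝ), 0 < m → 0 < s1 →
        ContDiffOn ℝ 1 f (Ici s1) →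
        IntegrableOn
          (fun s => s ^ (m - 1) * ((f s) ^ 2 + (s * deriv f s) ^ 2)) (Ici s1) →
        ∀ s ∈ Ici s1,
          s ^ m * (f s) ^ 2
            ≤ C * m⁻¹ *
              ∫ t in Ici s1, t ^ (m - 1) * ((f t) ^ 2 + (t * deriv f t) ^ 2) := by
  refine ⟨1, one_pos, ?_⟩
  intro m s1 f hm hs1 hf hint
  have huniq : UniqueDiffOn ℝ (Ici s1) := uniqueDiffOn_Ici s1
  set g : ℝ → ℝ := derivWithin f (Ici s1) with hgdef
  have hg_cont : ContinuousOn g (Ici s1) := hf.continuousOn_derivWithin huniq le_rfl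
  have hf_cont : ContinuousOn f (Ici s1) := hf.continuousOn
  have hderiv : ∀ t ∈ Ioi s1, HasDerivAt f (g t) t := fun t ht =>
    ((hf.differentiableOn one_ne_zero t (Ioi_subset_Ici_self ht)).hasDerivWithinAt).hasDerivAt (Ici_mem_nhds ht)
  have hgd : ∀ t ∈ Ioi s1, deriv f t = g t := fun t ht => (hderiv t ht).deriv
  set ψ : ℝ → ℝ := fun t => t ^ (m - 1) * ((f t) ^ 2 + (t * deriv f t) ^ 2) with hψdef
  set φ : ℝ → ℝ := fun t => t ^ (m - 1) * ((f t) ^ 2 + (t * g t) ^ 2) with hφdef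
  -- ψ = φ a.e. on Ici s1 (they agree except possibly at s1)
  have hae : ψ =ᵐ[volume.restrict (Ici s1)] φ := by
    have h1 : ∀ᵐ t ∂volume.restrict (Ici s1), t ≠ s1 := by
      have := (Set.countable_singleton s1).ae_notMem (volume : Measure ℝ)
      filter_upwards [ae_restrict_of_ae this] with t ht
      simpa using ht
    have h2 : ∀ᵐ t ∂volume.restrict (Ici s1), t ∈ Ici s1 := ae_restrict_mem measurableSet_Ici
    filter_upwards [h1, h2] with t ht1 ht2
    have : t ∈ Ioi s1 := lt_of_le_of_ne ht2 (Ne.symm ht1)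
    simp only [hψdef, hφdef, hgd t this]
  have hintφ : IntegrableOn φ (Ici s1) := hint.congr hae
  have hIeq : (∫ t in Ici s1, ψ t) = ∫ t in Ici s1, φ t := integral_congr_ae hae
  -- auxiliary continuity of rpow
  have hrpow : ∀ p : ℝ, ContinuousOn (fun t : ℝ => t ^ p) (Ici s1) := fun p t ht =>
    (Real.continuousAt_rpow_const t p (Or.inl (ne_of_gt (lt_of_lt_of_le hs1 ht)))).continuousWithinAt
  have hφ_cont : ContinuousOn φ (Ici s1) :=
    (hrpow (m - 1)).mul ((hf_cont.pow 2).add (((continuousOn_id.mul hg_cont)).pow 2))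
  have hφ_nonneg : ∀ t ∈ Ici s1, 0 ≤ φ t := by
    intro t ht
    have ht0 : 0 < t := lt_of_lt_of_le hs1 ht
    have : (0:ℝ) ≤ t ^ (m-1) := (Real.rpow_pos_of_pos ht0 _).le
    positivity
  have hI_nonneg : 0 ≤ ∫ t in Ici s1, ψ t := by
    rw [hIeq]
    exact setIntegral_nonneg measurableSet_Ici hφ_nonneg
  -- the function F and its derivative
  set F : ℝ → ℝ := fun t => t ^ m * (f t) ^ 2 with hFdef
  set F' : ℝ → ℝ := fun t => m * t ^ (m - 1) * (f t) ^ 2 + t ^ m * (2 * f t * g t) with hF'def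
  have hF : ∀ t ∈ Ioi s1, HasDerivAt F (F' t) t := by
    intro t ht
    have ht0 : t ≠ 0 := ne_of_gt (hs1.trans ht)
    have h1 : HasDerivAt (fun u : ℝ => u ^ m) (m * t ^ (m - 1)) t :=
      Real.hasDerivAt_rpow_const (Or.inl ht0)
    have h2 : HasDerivAt (fun u : ℝ => (f u) ^ 2) (2 * f t * g t) t := by
      have := (hderiv t ht).fun_pow 2
      simpa [pow_one, mul_comm, mul_assoc] using this
    simpa [hF'def] using h1.fun_mul h2
  have hFcont : ContinuousOn F (Ici s1) := (hrpow m).mul (hf_cont.pow 2)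
  have hF'cont : ContinuousOn F' (Ici s1) :=
    ((continuousOn_const.mul (hrpow (m - 1))).mul (hf_cont.pow 2)).add
      ((hrpow m).mul ((continuousOn_const.mul hf_cont).mul hg_cont))
  -- the key pointwise bound
  have key : ∀ t, s1 ≤ t → -(m⁻¹ * (t ^ (m - 1) * (t * g t) ^ 2)) ≤ F' t := by
    intro t ht
    have ht0 : 0 < t := lt_of_lt_of_le hs1 ht
    have hA : (0:ℝ) ≤ t ^ (m - 1) := (Real.rpow_pos_of_pos ht0 _).le
    have htm : t ^ m = t ^ (m - 1) * t := by
      rw [← Real.rpow_add_one (ne_of_gt ht0) (m - 1)]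
      ring_nf
    have hAsq : (0:ℝ) ≤ t ^ (m - 1) * (m * f t + t * g t) ^ 2 :=
      mul_nonneg hA (sq_nonneg _)
    have hminv : m⁻¹ * m = 1 := inv_mul_cancel₀ (ne_of_gt hm)
    simp only [hF'def, htm]
    nlinarith [hAsq, hm, mul_pos (inv_pos.mpr hm) hm, sq_nonneg (f t),
      mul_nonneg hA (sq_nonneg (f t)), mul_nonneg hA (sq_nonneg (t * g t)),
      mul_nonneg (inv_pos.mpr hm).le hAsq]
  -- main estimate
  intro s hs
  have hs0 : 0 < s := lt_of_lt_of_le hs1 hs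
  rw [one_mul]
  have main : ∀ ε > 0, s ^ m * (f s) ^ 2 - ε ≤ m⁻¹ * ∫ t in Ici s1, ψ t := by
    intro ε hε
    -- Step 1: find b ≥ s with F b ≤ ε
    obtain ⟨b, hb, hFb⟩ : ∃ b ∈ Ici s, F b ≤ ε := by
      by_contra hcon
      push_neg at hcon
      have hψs : IntegrableOn ψ (Ici s) := hint.mono_set (Ici_subset_Ici.mpr hs)
      have hbound : IntegrableOn (fun t : ℝ => ε * t⁻¹) (Ici s) := by
        refine hψs.integrable.mono' ?_ ?_
        · exact (measurable_const.mul measurable_inv).aestronglyMeasurable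
        · filter_upwards [ae_restrict_mem measurableSet_Ici] with t ht
          have hts1 : s1 ≤ t := hs.trans ht
          have ht0 : 0 < t := lt_of_lt_of_le hs1 hts1
          have h1 : ε < F t := hcon t ht
          have htm : t ^ m = t ^ (m - 1) * t := by
            rw [← Real.rpow_add_one (ne_of_gt ht0) (m - 1)]; ring_nf
          have h2 : ε * t⁻¹ < t ^ (m - 1) * (f t) ^ 2 := by
            have := (mul_lt_mul_of_pos_right h1 (inv_pos.mpr ht0))
            calc ε * t⁻¹ < F t * t⁻¹ := this
              _ = t ^ (m - 1) * (f t) ^ 2 := by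
                  simp only [hFdef, htm]; field_simp
          have h3 : t ^ (m - 1) * (f t) ^ 2 ≤ ψ t := by
            have hA : (0:ℝ) ≤ t ^ (m - 1) := (Real.rpow_pos_of_pos ht0 _).le
            simp only [hψdef]
            nlinarith [mul_nonneg hA (sq_nonneg (t * deriv f t))]
          have h4 : 0 < ε * t⁻¹ := mul_pos hε (inv_pos.mpr ht0)
          rw [Real.norm_eq_abs, abs_of_pos h4]
          linarith
      have hbound2 : IntegrableOn (fun t : ℝ => t⁻¹) (Ioi s) := by
        have := (hbound.mono_set Ioi_subset_Ici_self).integrable.const_mul ε⁻¹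
        have heq : (fun t : ℝ => ε⁻¹ * (ε * t⁻¹)) = fun t : ℝ => t⁻¹ := by
          funext t; field_simp
        rwa [heq] at this
      have hbound3 : IntegrableOn (fun t : ℝ => t ^ (-1 : ℝ)) (Ioi s) := by
        refine hbound2.congr_fun (fun t ht => ?_) measurableSet_Ioi
        exact (Real.rpow_neg_one t).symm
      rw [integrableOn_Ioi_rpow_iff hs0] at hbound3
      linarith
    -- Step 2: FTC on [s, b]
    have hsb : s ≤ b := hb
    have hIcc : Icc s b ⊆ Ici s1 := fun t ht => hs.trans ht.1
    have hFTC : ∫ t in s..b, F' t = F b - F s := by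
      refine intervalIntegral.integral_eq_sub_of_hasDeriv_right_of_le hsb
        (hFcont.mono hIcc) (fun x hx => ((hF x (lt_of_le_of_lt hs hx.1)).hasDerivWithinAt))
        ((hF'cont.mono ?_).intervalIntegrable_of_Icc hsb)
      exact hIcc
    -- Step 3: lower bound on ∫ F'
    have hlow : ∫ t in s..b, -(m⁻¹ * (t ^ (m - 1) * (t * g t) ^ 2)) ≤ ∫ t in s..b, F' t := by
      refine intervalIntegral.integral_mono_on hsb ?_ ?_ (fun t ht => key t (hs.trans ht.1))
      · exact (((continuousOn_const.mul ((hrpow (m-1)).mul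
          ((continuousOn_id.mul hg_cont).pow 2))).neg).mono hIcc).intervalIntegrable_of_Icc hsb
      · exact ((hF'cont.mono hIcc)).intervalIntegrable_of_Icc hsb
    have hJ : ∫ t in s..b, -(m⁻¹ * (t ^ (m - 1) * (t * g t) ^ 2))
        = -(m⁻¹ * ∫ t in s..b, t ^ (m - 1) * (t * g t) ^ 2) := by
      rw [← intervalIntegral.integral_const_mul, ← intervalIntegral.integral_neg]
    -- Step 4: bound the remaining integral by I
    have hJφ : ∫ t in s..b, t ^ (m - 1) * (t * g t) ^ 2 ≤ ∫ t in s..b, φ t := by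
      refine intervalIntegral.integral_mono_on hsb ?_ ?_ ?_
      · exact (((hrpow (m-1)).mul ((continuousOn_id.mul hg_cont).pow 2)).mono
          hIcc).intervalIntegrable_of_Icc hsb
      · exact ((hφ_cont.mono hIcc)).intervalIntegrable_of_Icc hsb
      · intro t ht
        have ht0 : 0 < t := lt_of_lt_of_le hs1 (hs.trans ht.1)
        have hA : (0:ℝ) ≤ t ^ (m - 1) := (Real.rpow_pos_of_pos ht0 _).le
        simp only [hφdef]
        nlinarith [mul_nonneg hA (sq_nonneg (f t))]
    have hφI : ∫ t in s..b, φ t ≤ ∫ t in Ici s1, φ t := by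
      rw [intervalIntegral.integral_of_le hsb]
      refine setIntegral_mono_set hintφ ?_ ?_
      · filter_upwards [ae_restrict_mem measurableSet_Ici] with t ht using hφ_nonneg t ht
      · exact HasSubset.Subset.eventuallyLE (fun t ht => hs.trans ht.1.le)
    have hchain : m⁻¹ * (∫ t in s..b, t ^ (m - 1) * (t * g t) ^ 2)
        ≤ m⁻¹ * ∫ t in Ici s1, ψ t := by
      rw [hIeq]
      exact mul_le_mul_of_nonneg_left (hJφ.trans hφI) (inv_pos.mpr hm).le
    have hFs : F s ≤ F b + m⁻¹ * ∫ t in s..b, t ^ (m - 1) * (t * g t) ^ 2 := by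
      rw [hJ] at hlow
      rw [hFTC] at hlow
      linarith
    have hfin : F s ≤ ε + m⁻¹ * ∫ t in Ici s1, ψ t := by linarith
    simp only [hFdef] at hfin
    linarith
  have := le_of_forall_sub_le (fun ε hε => main ε hε)
  simpa [hψdef] using this
end
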